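/- Let p₁, …, p_r be distinct odd primes, let ε₁, …, ε_r ∈ {1, −1} be arbitrary signs, and let a be an odd integer. Then there exists a prime q with q ≡ a (mod 8), q different from each pᵢ, such that the Legendre symbol (pᵢ/q) equals εᵢ for every i = 1, …, r. -/

import Mathlib

lemma exists_c_aux (P : ℕ) [Fact P.Prime] (hP : P ≠ 2) (t : ℤ) (ht : t = 1 ∨ t = -1) :
    ∃ c : ZMod P, c ≠ 0 ∧ legendreSym P c.val = t := by
  haveI : Fact (1 < P) := ⟨(Fact.out : P.Prime).one_lt⟩
  rcases ht with rfl | rfl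
  · refine ⟨1, one_ne_zero, ?_⟩
    have h1 : (((1 : ZMod P).val : ℕ) : ZMod P) = 1 := by
      simp [ZMod.natCast_val, ZMod.cast_id]
    rw [legendreSym.eq_one_iff' (p := P) (by rw [h1]; exact one_ne_zero), h1]
    exact IsSquare.one
  · obtain ⟨b, hb⟩ := FiniteField.exists_nonsquare (F := ZMod P)
      (by rw [ZMod.ringChar_zmod_n]; exact hP)
    have hb0 : b ≠ 0 := by rintro rfl; exact hb ⟨0, by ring⟩
    refine ⟨b, hb0, ?_⟩
    rw [legendreSym.eq_neg_one_iff' (p := P)]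
    simpa [ZMod.natCast_val, ZMod.cast_id] using hb

theorem exists_prime_with_prescribed_legendre_symbols (r : ℕ)
    (p : Fin r → ℕ) (hp : ∀ i, (p i).Prime) (hodd : ∀ i, p i ≠ 2)
    (hinj : Function.Injective p)
    (ε : Fin r → ℤ) (hε : ∀ i, ε i = 1 ∨ ε i = -1)
    (a : ℤ) (ha : Odd a) :
    ∃ q : ℕ, q.Prime ∧ (q : ℤ) % 8 = a % 8 ∧ (∀ i, q ≠ p i) ∧
      ∀ i, jacobiSym (p i : ℤ) q = ε i := by
  haveI : ∀ i, Fact (p i).Prime := fun i => ⟨hp i⟩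
  -- the target legendre values
  set t : Fin r → ℤ := fun i => if a % 4 = 3 ∧ p i % 4 = 3 then -ε i else ε i with ht_def
  have ht : ∀ i, t i = 1 ∨ t i = -1 := by
    intro i
    rcases hε i with h | h <;> simp only [ht_def, h] <;> split <;> simp
  have H : ∀ i, ∃ c : ZMod (p i), c ≠ 0 ∧ legendreSym (p i) c.val = t i :=
    fun i => exists_c_aux (p i) (hodd i) (t i) (ht i)
  choose c hc0 hcleg using H
  -- CRT setup
  set N : ℕ := ∏ i, p i with hN_def
  have hNpos : 0 < N := Finset.prod_pos fun i _ => (hp i).pos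
  have hcop : Nat.Coprime 8 N := by
    have : ∀ i ∈ Finset.univ, Nat.Coprime 8 (p i) := by
      intro i _
      have h2 : Nat.Coprime 2 (p i) :=
        (Nat.coprime_primes Nat.prime_two (hp i)).mpr (Ne.symm (hodd i))
      simpa [show (8:ℕ) = 2^3 by norm_num] using h2.pow_left 3
    exact Nat.Coprime.prod_right this
  have hpair : Pairwise (Function.onFun Nat.Coprime p) := fun i j hij =>
    (Nat.coprime_primes (hp i) (hp j)).mpr fun h => hij (hinj h)
  haveI : NeZero (8 * N) := ⟨by positivity⟩
  let e : ZMod (8 * N) ≃+* ZMod 8 × ZMod N := ZMod.chineseRemainder hcop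
  let f : ZMod N ≃+* ∀ i, ZMod (p i) := ZMod.prodEquivPi p hpair
  set b : ZMod (8 * N) := e.symm ((a : ZMod 8), f.symm c) with hb_def
  -- b is a unit
  have ha8 : ((a : ZMod 8)) * (a : ZMod 8) = 1 := by
    obtain ⟨k, rfl⟩ := ha
    obtain ⟨m, hm⟩ := Int.even_mul_succ_self k
    have key : (2*k+1 : ℤ) * (2*k+1) = 8*m+1 := by linear_combination 4*hm
    calc ((2*k+1 : ℤ) : ZMod 8) * ((2*k+1 : ℤ) : ZMod 8)
        = ((8*m+1 : ℤ) : ZMod 8) := by rw [← Int.cast_mul, key]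
      _ = 1 := by push_cast; simp [show (8 : ZMod 8) = 0 by decide]
  have hbu : IsUnit b := by
    refine IsUnit.of_mul_eq_one (a := b) (e.symm ((a : ZMod 8), f.symm fun i => (c i)⁻¹)) ?_
    rw [hb_def, ← map_mul, Prod.mk_mul_mk, ← map_mul]
    have : (c * fun i => (c i)⁻¹) = 1 := by
      funext i
      exact mul_inv_cancel₀ (hc0 i)
    rw [this, ha8, map_one, Prod.mk_eq_one.mpr ⟨rfl, rfl⟩, map_one]
  -- Dirichlet
  obtain ⟨q, hqN, hqp, hqmod⟩ := Nat.forall_exists_prime_gt_and_eq_mod hbu N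
  -- decompose the congruence
  have he : e (q : ZMod (8 * N)) = ((q : ZMod 8), (q : ZMod N)) := map_natCast _ q
  have hq2 : ((q : ZMod 8), (q : ZMod N)) = ((a : ZMod 8), f.symm c) := by
    rw [← he, hqmod, hb_def, RingEquiv.apply_symm_apply]
  have h8' : (q : ZMod 8) = (a : ZMod 8) := congrArg Prod.fst hq2
  have hNq : (q : ZMod N) = f.symm c := congrArg Prod.snd hq2
  have hqi : ∀ i, (q : ZMod (p i)) = c i := by
    intro i
    have := congrFun (congrArg f hNq) i
    rwa [RingEquiv.apply_symm_apply, map_natCast, Pi.natCast_apply] at this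
  -- q mod 8 = a mod 8
  have h8 : (q : ℤ) % 8 = a % 8 := by
    have h := (ZMod.intCast_eq_intCast_iff' (q : ℤ) a 8).mp (by exact_mod_cast h8')
    exact_mod_cast h
  -- q is odd
  have ha2 : a % 2 = 1 := Int.odd_iff.mp ha
  have hq2' : q % 2 = 1 := by omega
  -- q ≠ p i
  have hqne : ∀ i, q ≠ p i := by
    intro i h
    have : p i ≤ N := Nat.le_of_dvd hNpos (Finset.dvd_prod_of_mem p (Finset.mem_univ i))
    omega
  refine ⟨q, hqp, h8, hqne, fun i => ?_⟩
  -- the main jacobi computation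
  have hpi2 : p i % 2 = 1 := Nat.odd_iff.mp ((hp i).eq_two_or_odd'.resolve_left (hodd i))
  have hqr := jacobiSym.quadratic_reciprocity_if (a := p i) (b := q) hpi2 hq2'
  have hleg : jacobiSym (q : ℤ) (p i) = t i := by
    rw [← jacobiSym.legendreSym.to_jacobiSym (p i) (q : ℤ)]
    have : legendreSym (p i) (q : ℤ) = legendreSym (p i) ((c i).val : ℤ) := by
      unfold legendreSym
      congr 1
      push_cast
      rw [hqi i]
      simp [ZMod.natCast_val, ZMod.cast_id]
    rw [this]
    exact_mod_cast hcleg i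
  have hq4 : q % 4 = 3 ↔ a % 4 = 3 := by omega
  have htt : t i = if a % 4 = 3 ∧ p i % 4 = 3 then -ε i else ε i := rfl
  rw [← hqr, hleg, htt]
  by_cases hcond : p i % 4 = 3 ∧ q % 4 = 3
  · rw [if_pos hcond, if_pos ⟨hq4.mp hcond.2, hcond.1⟩]
    ring
  · rw [if_neg hcond, if_neg (by tauto)]
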